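/- For fixed α ∈ (0,1/2), the function m ↦ I(m,α) = sup_{θ<0}(αθ − log G(θ,1/m)) is increasing in m, where G(t,x) = (1 − e^{t(1+x)})/((1+1/x)(1 − e^{tx})). Equivalently, for fixed t < 0, G(t,x) is increasing in x > 0. -/

import Mathlib

open Real

private lemma key_ineq {u : ℝ} (hu : 0 < u) : u ^ 2 * Real.exp u < (Real.exp u - 1) ^ 2 := by
  have h2 : (0:ℝ) < u / 2 := by linarith
  have hs : u / 2 < Real.sinh (u / 2) := Real.self_lt_sinh_iff.mpr h2
  rw [Real.sinh_eq] at hs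
  set a := Real.exp (u / 2) with ha_def
  have ha : 0 < a := Real.exp_pos _
  have hainv : Real.exp (-(u / 2)) = a⁻¹ := by rw [Real.exp_neg]
  rw [hainv] at hs
  have hexpu : Real.exp u = a * a := by
    rw [ha_def, ← Real.exp_add]; ring_nf
  have h1 : u < a - a⁻¹ := by linarith
  have hpos : 0 < a - a⁻¹ := lt_trans hu h1
  have hsq : u ^ 2 < (a - a⁻¹) ^ 2 := by nlinarith
  have hid : (a - a⁻¹) ^ 2 * (a * a) = (a * a - 1) ^ 2 := by
    have h0 : a * a⁻¹ = 1 := mul_inv_cancel₀ (ne_of_gt ha)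
    nlinarith [h0]
  rw [hexpu]
  nlinarith [mul_pos ha ha]

private lemma psi_mono : StrictMonoOn (fun u : ℝ => (Real.exp u - 1)⁻¹ - u⁻¹) (Set.Ioi 0) := by
  have hd : ∀ u : ℝ, 0 < u →
      HasDerivAt (fun u : ℝ => (Real.exp u - 1)⁻¹ - u⁻¹)
        (-Real.exp u / (Real.exp u - 1) ^ 2 - (-1 / u ^ 2)) u := by
    intro u hu
    have hne : Real.exp u - 1 ≠ 0 := by
      have : 1 < Real.exp u := Real.one_lt_exp_iff.mpr hu
      linarith
    have h1 : HasDerivAt (fun u : ℝ => (Real.exp u - 1)⁻¹)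
        (-Real.exp u / (Real.exp u - 1) ^ 2) u := by
      simpa using ((Real.hasDerivAt_exp u).sub_const 1).fun_inv hne
    have h2 : HasDerivAt (fun u : ℝ => u⁻¹) (-1 / u ^ 2) u := by
      simpa using (hasDerivAt_id u).fun_inv (ne_of_gt hu)
    exact h1.sub h2
  apply strictMonoOn_of_deriv_pos (convex_Ioi 0)
  · intro u hu
    exact ((hd u hu).continuousAt).continuousWithinAt
  · intro u hu
    rw [interior_Ioi] at hu
    have hu' : (0:ℝ) < u := hu
    rw [(hd u hu').deriv]
    have hne : (0:ℝ) < Real.exp u - 1 := by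
      have : 1 < Real.exp u := Real.one_lt_exp_iff.mpr hu'
      linarith
    have hk := key_ineq hu'
    have : -Real.exp u / (Real.exp u - 1) ^ 2 - -1 / u ^ 2
        = ((Real.exp u - 1) ^ 2 - u ^ 2 * Real.exp u) / ((Real.exp u - 1) ^ 2 * u ^ 2) := by
      field_simp; ring
    rw [this]
    apply div_pos (by linarith) (by positivity)

private lemma phi_eq {t y : ℝ} (ht : t < 0) (hy : 0 < y) :
    -t * Real.exp (t * y) / (1 - Real.exp (t * y)) - 1 / y
      = -t * ((Real.exp (-t * y) - 1)⁻¹ - (-t * y)⁻¹) := by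
  have hE : Real.exp (-t * y) = (Real.exp (t * y))⁻¹ := by
    rw [← Real.exp_neg]; ring_nf
  have he : Real.exp (t * y) < 1 := by
    rw [← Real.exp_zero]
    exact Real.exp_lt_exp.mpr (mul_neg_of_neg_of_pos ht hy)
  have hepos : 0 < Real.exp (t * y) := Real.exp_pos _
  rw [hE]
  have h1 : (Real.exp (t*y))⁻¹ - 1 ≠ 0 := by
    have : 1 < (Real.exp (t*y))⁻¹ := (one_lt_inv₀ hepos).mpr he
    linarith
  have ht0 : t ≠ 0 := ne_of_lt ht
  have hy0 : y ≠ 0 := ne_of_gt hy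
  have hd : 1 - Real.exp (t * y) ≠ 0 := by linarith
  field_simp
  ring

private lemma phi_mono {t : ℝ} (ht : t < 0) :
    StrictMonoOn (fun y : ℝ => -t * Real.exp (t * y) / (1 - Real.exp (t * y)) - 1 / y)
      (Set.Ioi 0) := by
  intro a ha b hb hab
  simp only []
  rw [phi_eq ht ha, phi_eq ht hb]
  have hs : 0 < -t := by linarith
  apply mul_lt_mul_of_pos_left _ hs
  exact psi_mono (by simpa using mul_pos hs ha) (by simpa using mul_pos hs hb)
    (by nlinarith)

private lemma exp_lt_one' {t y : ℝ} (ht : t < 0) (hy : 0 < y) : Real.exp (t * y) < 1 := by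
  rw [← Real.exp_zero]
  exact Real.exp_lt_exp.mpr (mul_neg_of_neg_of_pos ht hy)

private lemma Fn_hasDeriv {t : ℝ} (ht : t < 0) {x : ℝ} (hx : 0 < x) :
    HasDerivAt (fun x : ℝ => Real.log (1 - Real.exp (t * (1 + x))) - Real.log (1 + x)
        - Real.log (1 - Real.exp (t * x)) + Real.log x)
      ((-t * Real.exp (t * (1 + x)) / (1 - Real.exp (t * (1 + x))) - 1 / (1 + x))
        - (-t * Real.exp (t * x) / (1 - Real.exp (t * x)) - 1 / x)) x := by
  have h1x : (0:ℝ) < 1 + x := by linarith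
  have hne1 : 1 - Real.exp (t * (1 + x)) ≠ 0 := by
    have := exp_lt_one' ht h1x; linarith
  have hne2 : 1 - Real.exp (t * x) ≠ 0 := by
    have := exp_lt_one' ht hx; linarith
  have d1 : HasDerivAt (fun x : ℝ => Real.log (1 - Real.exp (t * (1 + x))))
      (-(Real.exp (t * (1 + x)) * (t * 1)) / (1 - Real.exp (t * (1 + x)))) x :=
    (((((hasDerivAt_id x).const_add 1).const_mul t).exp).const_sub 1).log hne1
  have d2 : HasDerivAt (fun x : ℝ => Real.log (1 + x)) (1 / (1 + x)) x := by
    simpa using ((hasDerivAt_id x).const_add 1).log (ne_of_gt h1x)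
  have d3 : HasDerivAt (fun x : ℝ => Real.log (1 - Real.exp (t * x)))
      (-(Real.exp (t * x) * (t * 1)) / (1 - Real.exp (t * x))) x :=
    ((((hasDerivAt_id x).const_mul t).exp).const_sub 1).log hne2
  have d4 : HasDerivAt Real.log x⁻¹ x := Real.hasDerivAt_log (ne_of_gt hx)
  have := ((d1.fun_sub d2).fun_sub d3).fun_add d4
  refine this.congr_deriv ?_
  field_simp
  ring

private lemma Fn_mono {t : ℝ} (ht : t < 0) :
    StrictMonoOn (fun x : ℝ => Real.log (1 - Real.exp (t * (1 + x))) - Real.log (1 + x)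
        - Real.log (1 - Real.exp (t * x)) + Real.log x) (Set.Ioi 0) := by
  apply strictMonoOn_of_deriv_pos (convex_Ioi 0)
  · intro x hx
    exact (Fn_hasDeriv ht hx).continuousAt.continuousWithinAt
  · intro x hx
    rw [interior_Ioi] at hx
    have hx' : (0:ℝ) < x := hx
    rw [(Fn_hasDeriv ht hx').deriv]
    have := phi_mono ht (Set.mem_Ioi.mpr hx') (Set.mem_Ioi.mpr (by linarith : (0:ℝ) < 1 + x))
      (by linarith : x < 1 + x)
    simp only [] at this
    linarith

private lemma Gpos' {t : ℝ} (ht : t < 0) {y : ℝ} (hy : 0 < y) :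
    0 < (1 - Real.exp (t * (1 + y))) / ((1 + 1 / y) * (1 - Real.exp (t * y))) := by
  have h1y : (0:ℝ) < 1 + y := by linarith
  have hn1 : 0 < 1 - Real.exp (t * (1 + y)) := by have := exp_lt_one' ht h1y; linarith
  have hn2 : 0 < 1 - Real.exp (t * y) := by have := exp_lt_one' ht hy; linarith
  have : 0 < 1 + 1 / y := by positivity
  positivity

private lemma G_lt {t : ℝ} (ht : t < 0) {x₁ x₂ : ℝ} (h1 : 0 < x₁) (h12 : x₁ < x₂) :
    (1 - Real.exp (t * (1 + x₁))) / ((1 + 1 / x₁) * (1 - Real.exp (t * x₁))) <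
    (1 - Real.exp (t * (1 + x₂))) / ((1 + 1 / x₂) * (1 - Real.exp (t * x₂))) := by
  have h2 : 0 < x₂ := lt_trans h1 h12
  have logG : ∀ y : ℝ, 0 < y →
      Real.log ((1 - Real.exp (t * (1 + y))) / ((1 + 1 / y) * (1 - Real.exp (t * y))))
        = Real.log (1 - Real.exp (t * (1 + y))) - Real.log (1 + y)
          - Real.log (1 - Real.exp (t * y)) + Real.log y := by
    intro y hy
    have h1y : (0:ℝ) < 1 + y := by linarith
    have hn1 : 0 < 1 - Real.exp (t * (1 + y)) := by have := exp_lt_one' ht h1y; linarith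
    have hn2 : 0 < 1 - Real.exp (t * y) := by have := exp_lt_one' ht hy; linarith
    have hrw : (1 + 1 / y) = (1 + y) / y := by field_simp; ring
    rw [hrw, Real.log_div (ne_of_gt hn1) (by positivity),
      Real.log_mul (by positivity) (ne_of_gt hn2), Real.log_div (ne_of_gt h1y) (ne_of_gt hy)]
    ring
  have hmono := Fn_mono ht (Set.mem_Ioi.mpr h1) (Set.mem_Ioi.mpr h2) h12
  simp only [] at hmono
  rw [← logG x₁ h1, ← logG x₂ h2] at hmono
  have := Real.exp_lt_exp.mpr hmono
  rwa [Real.exp_log (Gpos' ht h1), Real.exp_log (Gpos' ht h2)] at this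

/-- `G` is bounded below by `1/(1+1/x)`, giving an upper bound on `αθ - log G`. -/
private lemma G_ge {t : ℝ} (ht : t < 0) {y : ℝ} (hy : 0 < y) :
    1 / (1 + 1 / y) ≤
      (1 - Real.exp (t * (1 + y))) / ((1 + 1 / y) * (1 - Real.exp (t * y))) := by
  have h1y : (0:ℝ) < 1 + y := by linarith
  have hn2 : 0 < 1 - Real.exp (t * y) := by have := exp_lt_one' ht hy; linarith
  have hden : 0 < 1 + 1 / y := by positivity
  have hle : Real.exp (t * (1 + y)) ≤ Real.exp (t * y) := by
    apply Real.exp_le_exp.mpr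
    nlinarith
  rw [div_le_div_iff₀ hden (by positivity)]
  nlinarith

theorem instability_rate_monotone (α : ℝ) (hα : α ∈ Set.Ioo (0 : ℝ) (1 / 2)) :
    (∀ m₁ m₂ : ℕ, 1 ≤ m₁ → m₁ ≤ m₂ →
      sSup {y : ℝ | ∃ θ : ℝ, θ < 0 ∧
          y = α * θ - Real.log ((1 - Real.exp (θ * (1 + 1 / m₁))) /
            ((1 + 1 / (1 / (m₁ : ℝ))) * (1 - Real.exp (θ * (1 / m₁)))))} ≤
      sSup {y : ℝ | ∃ θ : ℝ, θ < 0 ∧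
          y = α * θ - Real.log ((1 - Real.exp (θ * (1 + 1 / m₂))) /
            ((1 + 1 / (1 / (m₂ : ℝ))) * (1 - Real.exp (θ * (1 / m₂)))))}) ∧
    (∀ t : ℝ, t < 0 → ∀ x₁ x₂ : ℝ, 0 < x₁ → x₁ < x₂ →
      (1 - Real.exp (t * (1 + x₁))) / ((1 + 1 / x₁) * (1 - Real.exp (t * x₁))) <
      (1 - Real.exp (t * (1 + x₂))) / ((1 + 1 / x₂) * (1 - Real.exp (t * x₂)))) := by
  obtain ⟨hα0, hα2⟩ := hα
  constructor
  · intro m₁ m₂ hm1 hm2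
    have hm1R : (1:ℝ) ≤ (m₁:ℝ) := by exact_mod_cast hm1
    have hm2R : (1:ℝ) ≤ (m₂:ℝ) := le_trans hm1R (by exact_mod_cast hm2)
    have hm1pos : (0:ℝ) < (m₁:ℝ) := by linarith
    have hm2pos : (0:ℝ) < (m₂:ℝ) := by linarith
    have hx1pos : (0:ℝ) < 1 / (m₁:ℝ) := by positivity
    have hx2pos : (0:ℝ) < 1 / (m₂:ℝ) := by positivity
    have hx21 : 1 / (m₂:ℝ) ≤ 1 / (m₁:ℝ) := by
      apply one_div_le_one_div_of_le hm1pos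
      exact_mod_cast hm2
    -- canonical rewrite: 1 + 1/(1/m) = 1 + 1/x with x = 1/m
    have hX : ∀ n : ℕ, (0:ℝ) < n → (1 + 1 / (1 / (n:ℝ))) = 1 + 1 / (1 / (n:ℝ)) := fun _ _ => rfl
    -- pointwise inequality between G's
    have hGle : ∀ θ : ℝ, θ < 0 →
        (1 - Real.exp (θ * (1 + 1 / (m₂:ℝ)))) /
            ((1 + 1 / (1 / (m₂:ℝ))) * (1 - Real.exp (θ * (1 / (m₂:ℝ))))) ≤
        (1 - Real.exp (θ * (1 + 1 / (m₁:ℝ)))) /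
            ((1 + 1 / (1 / (m₁:ℝ))) * (1 - Real.exp (θ * (1 / (m₁:ℝ))))) := by
      intro θ hθ
      rcases eq_or_lt_of_le hx21 with h | h
      · rw [h]
      · exact le_of_lt (G_lt hθ hx2pos h)
    -- the m₂-set is bounded above
    have hBdd : BddAbove {y : ℝ | ∃ θ : ℝ, θ < 0 ∧
        y = α * θ - Real.log ((1 - Real.exp (θ * (1 + 1 / m₂))) /
          ((1 + 1 / (1 / (m₂ : ℝ))) * (1 - Real.exp (θ * (1 / m₂)))))} := by
      refine ⟨Real.log (1 + 1 / (1 / (m₂:ℝ))), ?_⟩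
      rintro y ⟨θ, hθ, rfl⟩
      have hge := G_ge hθ hx2pos
      have hden : (0:ℝ) < 1 + 1 / (1 / (m₂:ℝ)) := by positivity
      have hlog : Real.log (1 / (1 + 1 / (1 / (m₂:ℝ)))) ≤
          Real.log ((1 - Real.exp (θ * (1 + 1 / (m₂:ℝ)))) /
            ((1 + 1 / (1 / (m₂:ℝ))) * (1 - Real.exp (θ * (1 / (m₂:ℝ)))))) :=
        Real.log_le_log (by positivity) hge
      rw [one_div, Real.log_inv] at hlog
      have hαθ : α * θ ≤ 0 := le_of_lt (mul_neg_of_pos_of_neg hα0 hθ)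
      linarith
    -- compare suprema
    apply csSup_le
    · exact ⟨α * (-1) - Real.log ((1 - Real.exp ((-1) * (1 + 1 / m₁))) /
        ((1 + 1 / (1 / (m₁ : ℝ))) * (1 - Real.exp ((-1) * (1 / m₁))))),
        -1, by norm_num, rfl⟩
    · rintro y ⟨θ, hθ, rfl⟩
      have h1 : α * θ - Real.log ((1 - Real.exp (θ * (1 + 1 / m₁))) /
            ((1 + 1 / (1 / (m₁ : ℝ))) * (1 - Real.exp (θ * (1 / m₁))))) ≤
          α * θ - Real.log ((1 - Real.exp (θ * (1 + 1 / m₂))) /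
            ((1 + 1 / (1 / (m₂ : ℝ))) * (1 - Real.exp (θ * (1 / m₂))))) := by
        have := Real.log_le_log (Gpos' hθ hx2pos) (hGle θ hθ)
        linarith
      exact le_trans h1 (le_csSup hBdd ⟨θ, hθ, rfl⟩)
  · intro t ht x₁ x₂ h1 h12
    exact G_lt ht h1 h12
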